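/- arXiv:2303.11511 — 2 statements merged into one kernel-verified Lean document; each statement's English description precedes it below -/
import Mathlib

section
/- Let n be a positive natural number and E = ℝ^n with the Euclidean inner product. Let H and P be Borel probability measures on E with finite second moment, let m be a real number with 0 < m < 1/2, let G = (1−m)·H + m·P, and set Δ = μ_H − μ_P. Suppose H and P each have covariance bounded by φ². If v is a unit vector with ∫ ⟨x − μ_G, v⟩² dG(x) ≥ m(1−m)‖Δ‖₂² (in particular, any unit vector achieving the top eigenvalue of the covariance of G when Δ ≠ 0), then the alignment bound ⟨Δ, v⟩² ≥ ‖Δ‖₂² − φ²/(m(1−m)) holds. -/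
open MeasureTheory RealInnerProductSpace

/-- The mean of a measure on Euclidean space. -/
noncomputable def mean {n : ℕ} (ν : Measure (EuclideanSpace ℝ (Fin n))) :
    EuclideanSpace ℝ (Fin n) :=
  ∫ x, x ∂ν

/-- The mixture measure `(1 - m) • H + m • P`. -/
noncomputable def mixture {n : ℕ} (m : ℝ) (H P : Measure (EuclideanSpace ℝ (Fin n))) :
    Measure (EuclideanSpace ℝ (Fin n)) :=
  ENNReal.ofReal (1 - m) • H + ENNReal.ofReal m • P

variable {n : ℕ}

lemma aux_int_id (ν : Measure (EuclideanSpace ℝ (Fin n))) [IsFiniteMeasure ν]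
    (h2 : Integrable (fun x => ‖x‖ ^ 2) ν) :
    Integrable (fun x : EuclideanSpace ℝ (Fin n) => x) ν := by
  refine Integrable.mono' ((integrable_const (1:ℝ)).add h2) measurable_id.aestronglyMeasurable ?_
  filter_upwards with x
  show ‖x‖ ≤ 1 + ‖x‖ ^ 2
  nlinarith [norm_nonneg x, sq_nonneg (‖x‖ - 1)]

lemma aux_int_inner (ν : Measure (EuclideanSpace ℝ (Fin n))) [IsFiniteMeasure ν]
    (h2 : Integrable (fun x => ‖x‖ ^ 2) ν) (v : EuclideanSpace ℝ (Fin n)) :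
    Integrable (fun x => ⟪x, v⟫) ν := by
  refine Integrable.mono' ((aux_int_id ν h2).norm.mul_const ‖v‖)
    ((continuous_id.inner continuous_const).aestronglyMeasurable) ?_
  filter_upwards with x
  exact abs_real_inner_le_norm x v

lemma aux_int_sub_inner (ν : Measure (EuclideanSpace ℝ (Fin n))) [IsFiniteMeasure ν]
    (h2 : Integrable (fun x => ‖x‖ ^ 2) ν) (c v : EuclideanSpace ℝ (Fin n)) :
    Integrable (fun x => ⟪x - c, v⟫) ν := by
  have : (fun x : EuclideanSpace ℝ (Fin n) => ⟪x - c, v⟫)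
      = fun x => ⟪x, v⟫ - ⟪c, v⟫ := by
    funext x; rw [inner_sub_left]
  rw [this]
  exact (aux_int_inner ν h2 v).sub (integrable_const _)

lemma aux_int_sq (ν : Measure (EuclideanSpace ℝ (Fin n))) [IsFiniteMeasure ν]
    (h2 : Integrable (fun x => ‖x‖ ^ 2) ν) (c v : EuclideanSpace ℝ (Fin n)) :
    Integrable (fun x => ⟪x - c, v⟫ ^ 2) ν := by
  refine Integrable.mono' (((h2.const_mul 2).add (integrable_const (2 * ‖c‖^2))).mul_const (‖v‖^2))
    (((continuous_id.sub continuous_const).inner continuous_const).pow 2).aestronglyMeasurable ?_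
  filter_upwards with x
  have h1 : |⟪x - c, v⟫| ≤ ‖x - c‖ * ‖v‖ := abs_real_inner_le_norm _ _
  have h2' : ‖x - c‖ ≤ ‖x‖ + ‖c‖ := norm_sub_le _ _
  have h3 : ‖⟪x - c, v⟫ ^ 2‖ = ⟪x - c, v⟫ ^ 2 := by
    rw [Real.norm_eq_abs, abs_of_nonneg (sq_nonneg _)]
  rw [h3]
  show ⟪x - c, v⟫ ^ 2 ≤ (2 * ‖x‖ ^ 2 + 2 * ‖c‖ ^ 2) * ‖v‖ ^ 2
  have h4 : ⟪x - c, v⟫ ^ 2 ≤ (‖x - c‖ * ‖v‖) ^ 2 := by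
    rw [← sq_abs]
    exact pow_le_pow_left₀ (abs_nonneg _) h1 2
  have h5 : ‖x - c‖ ^ 2 ≤ 2 * ‖x‖ ^ 2 + 2 * ‖c‖ ^ 2 := by
    nlinarith [norm_nonneg (x - c), norm_nonneg x, norm_nonneg c, sq_nonneg (‖x‖ - ‖c‖)]
  nlinarith [sq_nonneg ‖v‖, norm_nonneg (x - c), norm_nonneg v, sq_nonneg (‖x - c‖ * ‖v‖)]

lemma aux_mean_inner (ν : Measure (EuclideanSpace ℝ (Fin n))) [IsFiniteMeasure ν]
    (h2 : Integrable (fun x => ‖x‖ ^ 2) ν) (v : EuclideanSpace ℝ (Fin n)) :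
    ∫ x, ⟪x, v⟫ ∂ν = ⟪mean ν, v⟫ := by
  have h := integral_inner (𝕜 := ℝ) (aux_int_id ν h2) v
  calc ∫ x, ⟪x, v⟫ ∂ν = ∫ x, ⟪v, x⟫ ∂ν := by
        congr 1; funext x; exact (real_inner_comm x v).symm
    _ = ⟪v, mean ν⟫ := h
    _ = ⟪mean ν, v⟫ := (real_inner_comm v (mean ν)).symm

lemma aux_expand (ν : Measure (EuclideanSpace ℝ (Fin n))) [IsProbabilityMeasure ν]
    (h2 : Integrable (fun x => ‖x‖ ^ 2) ν) (c v : EuclideanSpace ℝ (Fin n)) :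
    ∫ x, ⟪x - c, v⟫ ^ 2 ∂ν = (∫ x, ⟪x - mean ν, v⟫ ^ 2 ∂ν) + ⟪mean ν - c, v⟫ ^ 2 := by
  set b := ⟪mean ν - c, v⟫ with hb
  have key : ∀ x : EuclideanSpace ℝ (Fin n),
      ⟪x - c, v⟫ ^ 2 = ⟪x - mean ν, v⟫ ^ 2 + ((2 * b) * ⟪x - mean ν, v⟫ + b ^ 2) := by
    intro x
    have : ⟪x - c, v⟫ = ⟪x - mean ν, v⟫ + b := by
      rw [hb, ← inner_add_left]; congr 1; abel
    rw [this]; ring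
  rw [integral_congr_ae (ae_of_all _ key)]
  have i1 : Integrable (fun x => ⟪x - mean ν, v⟫ ^ 2) ν := aux_int_sq ν h2 _ v
  have i2 : Integrable (fun x => 2 * b * ⟪x - mean ν, v⟫) ν :=
    (aux_int_sub_inner ν h2 _ v).const_mul _
  have i3 : Integrable (fun x => 2 * b * ⟪x - mean ν, v⟫ + b ^ 2) ν :=
    i2.add (integrable_const _)
  rw [integral_add i1 i3, integral_add i2 (integrable_const _), integral_const_mul]
  have hzero : ∫ x, ⟪x - mean ν, v⟫ ∂ν = 0 := by
    have : (fun x : EuclideanSpace ℝ (Fin n) => ⟪x - mean ν, v⟫)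
        = fun x => ⟪x, v⟫ - ⟪mean ν, v⟫ := by
      funext x; rw [inner_sub_left]
    rw [this, integral_sub (aux_int_inner ν h2 v) (integrable_const _),
      aux_mean_inner ν h2 v, integral_const]
    simp
  rw [hzero]
  simp

lemma aux_mix_integral (H P : Measure (EuclideanSpace ℝ (Fin n)))
    [IsProbabilityMeasure H] [IsProbabilityMeasure P] {m : ℝ} (hm0 : 0 < m) (hm1 : m < 1)
    {F : Type*} [NormedAddCommGroup F] [NormedSpace ℝ F]
    (f : EuclideanSpace ℝ (Fin n) → F) (hfH : Integrable f H) (hfP : Integrable f P) :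
    ∫ x, f x ∂(mixture m H P) = (1 - m) • ∫ x, f x ∂H + m • ∫ x, f x ∂P := by
  rw [mixture, integral_add_measure (hfH.smul_measure (by simp)) (hfP.smul_measure (by simp)),
    integral_smul_measure, integral_smul_measure,
    ENNReal.toReal_ofReal (by linarith), ENNReal.toReal_ofReal hm0.le]

lemma aux_mix_integrable (H P : Measure (EuclideanSpace ℝ (Fin n)))
    {m : ℝ} {F : Type*} [NormedAddCommGroup F]
    (f : EuclideanSpace ℝ (Fin n) → F) (hfH : Integrable f H) (hfP : Integrable f P) :
    Integrable f (mixture m H P) := by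
  rw [mixture]
  exact (hfH.smul_measure (by simp)).add_measure (hfP.smul_measure (by simp))

theorem top_eigenvector_alignment {n : ℕ} (hn : 0 < n)
    (H P : Measure (EuclideanSpace ℝ (Fin n)))
    [IsProbabilityMeasure H] [IsProbabilityMeasure P]
    (hH2 : Integrable (fun x => ‖x‖ ^ 2) H) (hP2 : Integrable (fun x => ‖x‖ ^ 2) P)
    (m : ℝ) (hm0 : 0 < m) (hm1 : m < 1 / 2) (φ : ℝ)
    (hHcov : ∀ u : EuclideanSpace ℝ (Fin n), ‖u‖ = 1 →
      ∫ x, ⟪x - mean H, u⟫ ^ 2 ∂H ≤ φ ^ 2)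
    (hPcov : ∀ u : EuclideanSpace ℝ (Fin n), ‖u‖ = 1 →
      ∫ x, ⟪x - mean P, u⟫ ^ 2 ∂P ≤ φ ^ 2)
    (v : EuclideanSpace ℝ (Fin n)) (hv : ‖v‖ = 1)
    (hvar : (∫ x, ⟪x - mean (mixture m H P), v⟫ ^ 2 ∂(mixture m H P)) ≥
      m * (1 - m) * ‖mean H - mean P‖ ^ 2) :
    ⟪mean H - mean P, v⟫ ^ 2 ≥ ‖mean H - mean P‖ ^ 2 - φ ^ 2 / (m * (1 - m)) := by
  have hm1' : m < 1 := by linarith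
  set μG := mean (mixture m H P) with hμG
  have hμGeq : μG = (1 - m) • mean H + m • mean P := by
    rw [hμG, mean, aux_mix_integral H P hm0 hm1' _ (aux_int_id H hH2) (aux_int_id P hP2)]
    rfl
  -- decompose the mixture variance
  have hsplit : ∫ x, ⟪x - μG, v⟫ ^ 2 ∂(mixture m H P)
      = (1 - m) * ∫ x, ⟪x - μG, v⟫ ^ 2 ∂H + m * ∫ x, ⟪x - μG, v⟫ ^ 2 ∂P := by
    have := aux_mix_integral H P hm0 hm1' (fun x => ⟪x - μG, v⟫ ^ 2)
      (aux_int_sq H hH2 μG v) (aux_int_sq P hP2 μG v)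
    simpa using this
  have hHdec := aux_expand H hH2 μG v
  have hPdec := aux_expand P hP2 μG v
  have hHμ : mean H - μG = m • (mean H - mean P) := by
    rw [hμGeq]
    module
  have hPμ : mean P - μG = (-(1 - m)) • (mean H - mean P) := by
    rw [hμGeq]
    module
  set Δ := mean H - mean P with hΔ
  have hinnH : ⟪mean H - μG, v⟫ = m * ⟪Δ, v⟫ := by rw [hHμ, real_inner_smul_left]
  have hinnP : ⟪mean P - μG, v⟫ = (-(1 - m)) * ⟪Δ, v⟫ := by rw [hPμ, real_inner_smul_left]
  have hVH : ∫ x, ⟪x - mean H, v⟫ ^ 2 ∂H ≤ φ ^ 2 := hHcov v hv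
  have hVP : ∫ x, ⟪x - mean P, v⟫ ^ 2 ∂P ≤ φ ^ 2 := hPcov v hv
  have hVH0 : 0 ≤ ∫ x, ⟪x - mean H, v⟫ ^ 2 ∂H := integral_nonneg fun x => sq_nonneg _
  have hVP0 : 0 ≤ ∫ x, ⟪x - mean P, v⟫ ^ 2 ∂P := integral_nonneg fun x => sq_nonneg _
  -- combine
  have hkey : m * (1 - m) * ‖Δ‖ ^ 2 ≤ φ ^ 2 + m * (1 - m) * ⟪Δ, v⟫ ^ 2 := by
    have h1 : m * (1 - m) * ‖Δ‖ ^ 2 ≤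
        (1 - m) * (∫ x, ⟪x - mean H, v⟫ ^ 2 ∂H + (m * ⟪Δ, v⟫) ^ 2)
          + m * (∫ x, ⟪x - mean P, v⟫ ^ 2 ∂P + ((-(1 - m)) * ⟪Δ, v⟫) ^ 2) := by
      calc m * (1 - m) * ‖Δ‖ ^ 2 ≤ ∫ x, ⟪x - μG, v⟫ ^ 2 ∂(mixture m H P) := hvar
        _ = _ := by rw [hsplit, hHdec, hPdec, hinnH, hinnP]
    nlinarith
  have hpos : 0 < m * (1 - m) := mul_pos hm0 (by linarith)
  have hfin : ‖Δ‖ ^ 2 - ⟪Δ, v⟫ ^ 2 ≤ φ ^ 2 / (m * (1 - m)) := by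
    rw [le_div_iff₀ hpos]
    nlinarith
  linarith
end

section
/- Let n be a positive natural number and E = ℝ^n with the Euclidean inner product. Let H and P be Borel probability measures on E with finite second moment, let m be a real number with 0 < m < 1/2, let G = (1−m)·H + m·P, and set Δ = μ_H − μ_P. Suppose P has covariance bounded by φ². Then for every unit vector v ∈ E and every real τ with 0 ≤ τ < (1−m)·|⟨Δ, v⟩|, the inner region of the projection of P relative to the mixture mean satisfies P({x ∈ E : |⟨x − μ_G, v⟩| < τ}) ≤ φ² / ((1−m)·|⟨Δ, v⟩| − τ)². -/
open MeasureTheory RealInnerProductSpace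

lemma integrable_id_of_sq {n : ℕ} (ν : Measure (EuclideanSpace ℝ (Fin n)))
    [IsProbabilityMeasure ν] (h2 : Integrable (fun x => ‖x‖ ^ 2) ν) :
    Integrable (fun x : EuclideanSpace ℝ (Fin n) => x) ν := by
  refine Integrable.mono' ((integrable_const 1).add h2) aestronglyMeasurable_id
    (ae_of_all _ fun x => ?_)
  simp only [Pi.add_apply]
  rcases le_total ‖x‖ 1 with h | h
  · nlinarith [sq_nonneg ‖x‖]
  · nlinarith

theorem poisoned_inner_bound {n : ℕ} (hn : 0 < n)
    (H P : Measure (EuclideanSpace ℝ (Fin n)))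
    [IsProbabilityMeasure H] [IsProbabilityMeasure P]
    (hH2 : Integrable (fun x => ‖x‖ ^ 2) H) (hP2 : Integrable (fun x => ‖x‖ ^ 2) P)
    (m : ℝ) (hm0 : 0 < m) (hm1 : m < 1 / 2) (φ : ℝ)
    (hPcov : ∀ u : EuclideanSpace ℝ (Fin n), ‖u‖ = 1 →
      ∫ x, ⟪x - mean P, u⟫ ^ 2 ∂P ≤ φ ^ 2)
    (v : EuclideanSpace ℝ (Fin n)) (hv : ‖v‖ = 1)
    (τ : ℝ) (hτ0 : 0 ≤ τ) (hτ : τ < (1 - m) * |⟪mean H - mean P, v⟫|) :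
    P {x | |⟪x - mean (mixture m H P), v⟫| < τ} ≤
      ENNReal.ofReal (φ ^ 2 / ((1 - m) * |⟪mean H - mean P, v⟫| - τ) ^ 2) := by
  set D : ℝ := ⟪mean H - mean P, v⟫ with hD
  set c : ℝ := (1 - m) * |D| - τ with hc
  have hcpos : 0 < c := by rw [hc]; linarith
  have hm1' : (0:ℝ) ≤ 1 - m := by linarith
  have hmH := integrable_id_of_sq H hH2
  have hmP := integrable_id_of_sq P hP2
  have hmix : mean (mixture m H P) = (1 - m) • mean H + m • mean P := by
    unfold mean mixture
    rw [integral_add_measure (hmH.smul_measure ENNReal.ofReal_ne_top)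
        (hmP.smul_measure ENNReal.ofReal_ne_top),
      integral_smul_measure, integral_smul_measure,
      ENNReal.toReal_ofReal hm1', ENNReal.toReal_ofReal hm0.le]
  have hpt : ∀ x : EuclideanSpace ℝ (Fin n),
      ⟪x - mean (mixture m H P), v⟫ = ⟪x - mean P, v⟫ - (1 - m) * D := by
    intro x
    rw [hmix]
    have hx : x - ((1 - m) • mean H + m • mean P)
        = (x - mean P) - (1 - m) • (mean H - mean P) := by
      rw [smul_sub]; module
    rw [hx, inner_sub_left, real_inner_smul_left, hD]
  have hsub : {x : EuclideanSpace ℝ (Fin n) | |⟪x - mean (mixture m H P), v⟫| < τ}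
      ⊆ {x | c ^ 2 ≤ ⟪x - mean P, v⟫ ^ 2} := by
    intro x hx
    simp only [Set.mem_setOf_eq] at hx ⊢
    rw [hpt x] at hx
    have h1 : c ≤ |⟪x - mean P, v⟫| := by
      have h2 : |(1 - m) * D| - |⟪x - mean P, v⟫| ≤ |(1 - m) * D - ⟪x - mean P, v⟫| :=
        abs_sub_abs_le_abs_sub _ _
      rw [abs_sub_comm] at h2
      rw [abs_mul, abs_of_nonneg hm1'] at h2
      rw [hc]
      linarith
    calc c ^ 2 ≤ |⟪x - mean P, v⟫| ^ 2 := by nlinarith [abs_nonneg (⟪x - mean P, v⟫ : ℝ)]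
      _ = ⟪x - mean P, v⟫ ^ 2 := sq_abs _
  have hf_int : Integrable (fun x => (⟪x - mean P, v⟫ : ℝ) ^ 2) P := by
    refine Integrable.mono' ((hP2.const_mul 2).add (integrable_const (2 * ‖mean P‖ ^ 2)))
      (Continuous.aestronglyMeasurable (((continuous_id.sub continuous_const).inner continuous_const).pow 2)) (ae_of_all _ fun x => ?_)
    have h1 : |(⟪x - mean P, v⟫ : ℝ)| ≤ ‖x - mean P‖ * ‖v‖ := abs_real_inner_le_norm _ _
    rw [hv, mul_one] at h1
    have h2 : ‖x - mean P‖ ≤ ‖x‖ + ‖mean P‖ := norm_sub_le _ _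
    have h3 : ‖(⟪x - mean P, v⟫ : ℝ) ^ 2‖ = |(⟪x - mean P, v⟫ : ℝ)| ^ 2 := by
      rw [Real.norm_eq_abs, abs_of_nonneg (sq_nonneg _), sq_abs]
    rw [h3]
    simp only [Pi.add_apply]
    have ha := pow_le_pow_left₀ (abs_nonneg (⟪x - mean P, v⟫ : ℝ)) h1 2
    have hb := pow_le_pow_left₀ (norm_nonneg (x - mean P)) h2 2
    nlinarith [sq_nonneg (‖x‖ - ‖mean P‖)]
  have hmar := mul_meas_ge_le_integral_of_nonneg (μ := P)
    (ae_of_all _ fun x => sq_nonneg (⟪x - mean P, v⟫ : ℝ)) hf_int (c ^ 2)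
  have hcov := hPcov v hv
  have hkey : (P {x | c ^ 2 ≤ ⟪x - mean P, v⟫ ^ 2}).toReal ≤ φ ^ 2 / c ^ 2 := by
    rw [le_div_iff₀ (by positivity)]
    have hmar' : c ^ 2 * (P {x | c ^ 2 ≤ ⟪x - mean P, v⟫ ^ 2}).toReal ≤ ∫ x, ⟪x - mean P, v⟫ ^ 2 ∂P := hmar
    nlinarith
  calc P {x | |⟪x - mean (mixture m H P), v⟫| < τ}
      ≤ P {x | c ^ 2 ≤ ⟪x - mean P, v⟫ ^ 2} := measure_mono hsub
    _ ≤ ENNReal.ofReal (φ ^ 2 / c ^ 2) := by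
        rw [← ENNReal.ofReal_toReal (measure_ne_top P _)]
        exact ENNReal.ofReal_le_ofReal hkey
    _ = ENNReal.ofReal (φ ^ 2 / ((1 - m) * |D| - τ) ^ 2) := by rw [hc]
end
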